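/- For every t ∈ ℂ⁴, the dimension of the deformed Dolbeault cohomology H^{2,2}(t) = (ker(δ_t) ∩ Λ^{2,2}) / δ_t(Λ^{2,1}) equals 6 if (t₁₁,t₁₂,t₂₁,t₂₂) = (0,0,0,0) and equals 5 otherwise. -/
import Mathlib


noncomputable section

open ExteriorAlgebra

/-- The exterior algebra `Λ` over `ℂ` on six generators. -/
abbrev Lam : Type := ExteriorAlgebra ℂ (Fin 6 → ℂ)

/-- The generators `x₁, x₂, x₃` of bidegree `(1,0)` (indexed by `0, 1, 2`). -/
def xg (i : Fin 3) : Lam := ExteriorAlgebra.ι ℂ (Pi.single (Fin.castAdd 3 i) 1)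

/-- The generators `y₁, y₂, y₃` of bidegree `(0,1)` (indexed by `0, 1, 2`). -/
def yg (j : Fin 3) : Lam := ExteriorAlgebra.ι ℂ (Pi.single (Fin.natAdd 3 j) 1)

/-- The ordered wedge monomial `x_{i₁}∧⋯∧x_{i_p}∧y_{j₁}∧⋯∧y_{j_q}` attached
to finsets `s = {i₁ < ⋯ < i_p}` and `u = {j₁ < ⋯ < j_q}`. -/
def monom (s u : Finset (Fin 3)) : Lam :=
  ((s.sort (· ≤ ·)).map xg).prod * ((u.sort (· ≤ ·)).map yg).prod

/-- The bigraded component `Λ^{p,q}`, the span of the monomials of bidegree `(p,q)`. -/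
def bigraded (p q : ℤ) : Submodule ℂ Lam :=
  Submodule.span ℂ
    {m | ∃ s u : Finset (Fin 3), (s.card : ℤ) = p ∧ (u.card : ℤ) = q ∧ m = monom s u}

/-- The component of pure total degree `k` of `Λ`. -/
def degComp (k : ℕ) : Submodule ℂ Lam :=
  LinearMap.range (ExteriorAlgebra.ι ℂ : (Fin 6 → ℂ) →ₗ[ℂ] Lam) ^ k

/-- The graded Leibniz rule: `d(a∧b) = d(a)∧b + (−1)ᵏ a∧d(b)` for `a` of pure
total degree `k`. -/
def IsAntiderivation (d : Lam →ₗ[ℂ] Lam) : Prop :=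
  ∀ (k : ℕ), ∀ a ∈ degComp k, ∀ b : Lam,
    d (a * b) = d a * b + ((-1 : ℂ) ^ k) • (a * d b)

/-- `d` is the map `∂`: the antiderivation with `∂x₁ = ∂x₂ = 0`, `∂x₃ = −x₁∧x₂`,
`∂yⱼ = 0`. -/
def IsDel (d : Lam →ₗ[ℂ] Lam) : Prop :=
  IsAntiderivation d ∧ d (xg 0) = 0 ∧ d (xg 1) = 0 ∧ d (xg 2) = -(xg 0 * xg 1) ∧
    (∀ j, d (yg j) = 0)

/-- `d` is the map `δ_t`: the antiderivation with `δ_t x₁ = δ_t x₂ = 0`,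
`δ_t x₃ = t₂₁ x₁∧y₁ − t₁₁ x₂∧y₁ + t₂₂ x₁∧y₂ − t₁₂ x₂∧y₂`, `δ_t y₁ = δ_t y₂ = 0`,
`δ_t y₃ = −y₁∧y₂`. -/
def IsDelta (t11 t12 t21 t22 : ℂ) (d : Lam →ₗ[ℂ] Lam) : Prop :=
  IsAntiderivation d ∧ d (xg 0) = 0 ∧ d (xg 1) = 0 ∧
    d (xg 2) = t21 • (xg 0 * yg 0) - t11 • (xg 1 * yg 0)
      + t22 • (xg 0 * yg 1) - t12 • (xg 1 * yg 1) ∧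
    d (yg 0) = 0 ∧ d (yg 1) = 0 ∧ d (yg 2) = -(yg 0 * yg 1)

/-- The dimension of the quotient of the subspace `K` by (its intersection with)
the subspace `I`; when `I ⊆ K` this is `dim (K / I)`. -/
def quotDim (K I : Submodule ℂ Lam) : ℕ :=
  Module.finrank ℂ (↥K ⧸ Submodule.comap K.subtype I)


/-! ### Auxiliary machinery -/

/-- uniform generators -/
def gen (k : Fin 6) : Lam := ExteriorAlgebra.ι ℂ (Pi.single k 1)

lemma xg0 : xg 0 = gen 0 := rfl
lemma xg1 : xg 1 = gen 1 := rfl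
lemma xg2 : xg 2 = gen 2 := rfl
lemma yg0 : yg 0 = gen 3 := rfl
lemma yg1 : yg 1 = gen 4 := rfl
lemma yg2 : yg 2 = gen 5 := rfl

lemma gsq (k : Fin 6) : gen k * gen k = 0 := ExteriorAlgebra.ι_sq_zero _
lemma gsq' (k : Fin 6) (b : Lam) : gen k * (gen k * b) = 0 := by
  rw [← mul_assoc, gsq, zero_mul]
lemma gswap {j k : Fin 6} (_h : j < k) : gen k * gen j = -(gen j * gen k) := by
  have := ExteriorAlgebra.ι_add_mul_swap (R := ℂ) (Pi.single k (1:ℂ) : Fin 6 → ℂ) (Pi.single j 1)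
  rw [eq_neg_iff_add_eq_zero]; exact this
lemma gswap' {j k : Fin 6} (h : j < k) (b : Lam) :
    gen k * (gen j * b) = -(gen j * (gen k * b)) := by
  rw [← mul_assoc, gswap h, neg_mul, mul_assoc]

lemma peel {d : Lam →ₗ[ℂ] Lam} (hd : IsAntiderivation d) (k : Fin 6) (b : Lam) :
    d (gen k * b) = d (gen k) * b - gen k * d b := by
  have h1 : gen k ∈ degComp 1 := by
    rw [degComp, pow_one]; exact ⟨_, rfl⟩
  have := hd 1 (gen k) h1 b
  simpa [sub_eq_add_neg] using this

/-- family of alternating maps concentrated in degree `n`: coordinate along `σ`. -/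
def coeffA (n : ℕ) (σ : Fin n → Fin 6) :
    ∀ m, ((Fin 6 → ℂ) [⋀^Fin m]→ₗ[ℂ] ℂ) := fun m =>
  if h : n = m then
    (Matrix.detRowAlternating.compLinearMap
      (LinearMap.pi fun r => LinearMap.proj (σ r))).domDomCongr (finCongr h)
  else 0

def coeffF (n : ℕ) (σ : Fin n → Fin 6) : Lam →ₗ[ℂ] ℂ :=
  ExteriorAlgebra.liftAlternating (coeffA n σ)

lemma coeffF_prod (n : ℕ) (σ : Fin n → Fin 6) (l : Fin n → Fin 6) :
    coeffF n σ (ExteriorAlgebra.ιMulti ℂ n fun i => Pi.single (l i) 1) =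
      Matrix.det (Matrix.of fun i j => if σ j = l i then (1:ℂ) else 0) := by
  rw [coeffF, ExteriorAlgebra.liftAlternating_apply_ιMulti, coeffA, dif_pos rfl]
  simp [Matrix.detRowAlternating, Matrix.det]
  congr 1
  ext i j
  simp [Pi.single_apply]

lemma prod4 (a b c d : Fin 6) :
    gen a * (gen b * (gen c * gen d)) =
      ExteriorAlgebra.ιMulti ℂ 4 fun i => Pi.single (![a,b,c,d] i) 1 := by
  rw [ExteriorAlgebra.ιMulti_apply]
  simp only [List.ofFn_succ, List.ofFn_zero, List.prod_cons, List.prod_nil, mul_one,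
    Matrix.cons_val_zero, Matrix.cons_val_one, Matrix.head_cons, Matrix.cons_val_succ, gen,
    Fin.succ_zero_eq_one]

lemma prod5 (a b c d e : Fin 6) :
    gen a * (gen b * (gen c * (gen d * gen e))) =
      ExteriorAlgebra.ιMulti ℂ 5 fun i => Pi.single (![a,b,c,d,e] i) 1 := by
  rw [ExteriorAlgebra.ιMulti_apply]
  simp only [List.ofFn_succ, List.ofFn_zero, List.prod_cons, List.prod_nil, mul_one,
    Matrix.cons_val_zero, Matrix.cons_val_one, Matrix.head_cons, Matrix.cons_val_succ, gen,
    Fin.succ_zero_eq_one]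

lemma ev_ne (σ : Fin 4 → Fin 6) (a b c d : Fin 6) (r : Fin 4)
    (h : ∀ j, σ j ≠ ![a,b,c,d] r) :
    coeffF 4 σ (gen a * (gen b * (gen c * gen d))) = 0 := by
  rw [prod4, coeffF_prod]
  exact Matrix.det_eq_zero_of_row_eq_zero r (fun j => if_neg (h j))

lemma ev_eq (a b c d : Fin 6) (hinj : Function.Injective ![a,b,c,d]) :
    coeffF 4 ![a,b,c,d] (gen a * (gen b * (gen c * gen d))) = 1 := by
  rw [prod4, coeffF_prod]
  have : (Matrix.of fun i j => if ![a,b,c,d] j = ![a,b,c,d] i then (1:ℂ) else 0) = 1 := by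
    ext i j
    simp [Matrix.one_apply, hinj.eq_iff, eq_comm]
  rw [this, Matrix.det_one]

def m22 : Fin 9 → Lam :=
  ![gen 0 * (gen 1 * (gen 3 * gen 4)), gen 0 * (gen 1 * (gen 3 * gen 5)),
    gen 0 * (gen 1 * (gen 4 * gen 5)), gen 0 * (gen 2 * (gen 3 * gen 4)),
    gen 0 * (gen 2 * (gen 3 * gen 5)), gen 0 * (gen 2 * (gen 4 * gen 5)),
    gen 1 * (gen 2 * (gen 3 * gen 4)), gen 1 * (gen 2 * (gen 3 * gen 5)),
    gen 1 * (gen 2 * (gen 4 * gen 5))]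

def S22 : Fin 9 → (Fin 4 → Fin 6) :=
  ![![0,1,3,4], ![0,1,3,5], ![0,1,4,5], ![0,2,3,4], ![0,2,3,5], ![0,2,4,5],
    ![1,2,3,4], ![1,2,3,5], ![1,2,4,5]]

def m21 : Fin 9 → Lam :=
  ![gen 0 * (gen 1 * gen 3), gen 0 * (gen 1 * gen 4), gen 0 * (gen 1 * gen 5),
    gen 0 * (gen 2 * gen 3), gen 0 * (gen 2 * gen 4), gen 0 * (gen 2 * gen 5),
    gen 1 * (gen 2 * gen 3), gen 1 * (gen 2 * gen 4), gen 1 * (gen 2 * gen 5)]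

lemma evd : ∀ n, coeffF 4 (S22 n) (m22 n) = 1 := by
  intro n; fin_cases n <;> exact ev_eq _ _ _ _ (by decide)

lemma evo : ∀ n i : Fin 9, n ≠ i → coeffF 4 (S22 n) (m22 i) = 0 := by
  intro n i hni
  fin_cases n <;> fin_cases i <;>
    first
      | exact absurd rfl hni
      | exact ev_ne _ _ _ _ _ 0 (by decide)
      | exact ev_ne _ _ _ _ _ 1 (by decide)
      | exact ev_ne _ _ _ _ _ 2 (by decide)
      | exact ev_ne _ _ _ _ _ 3 (by decide)

lemma cXval : coeffF 5 ![0,1,3,4,5] (gen 0 * (gen 1 * (gen 3 * (gen 4 * gen 5)))) = 1 := by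
  rw [prod5, coeffF_prod]
  simp (config := { decide := true }) [Matrix.det_succ_row_zero, Fin.sum_univ_succ]

lemma Xne : (gen 0 * (gen 1 * (gen 3 * (gen 4 * gen 5))) : Lam) ≠ 0 := by
  intro h
  have := cXval
  rw [h, map_zero] at this
  exact zero_ne_one this

lemma hli22 : LinearIndependent ℂ m22 := by
  rw [Fintype.linearIndependent_iff]
  intro c hc i
  have h := congrArg (coeffF 4 (S22 i)) hc
  rw [map_zero, map_sum] at h
  rw [Finset.sum_eq_single i] at h
  · rw [map_smul, evd i, smul_eq_mul, mul_one] at h; exact h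
  · intro j _ hji
    rw [map_smul, evo i j (Ne.symm hji), smul_eq_mul, mul_zero]
  · intro habs; exact absurd (Finset.mem_univ i) habs

lemma sortA : ({0,1} : Finset (Fin 3)).sort (· ≤ ·) = [0,1] := by
  rw [show ({0,1} : Finset (Fin 3)) = insert 0 {1} from rfl,
    Finset.sort_insert _ (by decide) (by decide), Finset.sort_singleton]
lemma sortB : ({0,2} : Finset (Fin 3)).sort (· ≤ ·) = [0,2] := by
  rw [show ({0,2} : Finset (Fin 3)) = insert 0 {2} from rfl,
    Finset.sort_insert _ (by decide) (by decide), Finset.sort_singleton]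
lemma sortC : ({1,2} : Finset (Fin 3)).sort (· ≤ ·) = [1,2] := by
  rw [show ({1,2} : Finset (Fin 3)) = insert 1 {2} from rfl,
    Finset.sort_insert _ (by decide) (by decide), Finset.sort_singleton]
lemma sortD : ({0} : Finset (Fin 3)).sort (· ≤ ·) = [0] := Finset.sort_singleton _ _
lemma sortE : ({1} : Finset (Fin 3)).sort (· ≤ ·) = [1] := Finset.sort_singleton _ _
lemma sortF : ({2} : Finset (Fin 3)).sort (· ≤ ·) = [2] := Finset.sort_singleton _ _

lemma card2 : ∀ v : Finset (Fin 3), v.card = 2 → v = {0,1} ∨ v = {0,2} ∨ v = {1,2} := by decide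
lemma card1 : ∀ v : Finset (Fin 3), v.card = 1 → v = {0} ∨ v = {1} ∨ v = {2} := by decide


lemma mon22_0 : monom ({0,1} : Finset (Fin 3)) ({0,1} : Finset (Fin 3)) = m22 0 := by
  rw [monom, sortA]
  simp only [List.map_cons, List.map_nil, List.prod_cons, List.prod_nil, mul_one,
    xg0, xg1, xg2, yg0, yg1, yg2, mul_assoc]
  rfl

lemma mon22_1 : monom ({0,1} : Finset (Fin 3)) ({0,2} : Finset (Fin 3)) = m22 1 := by
  rw [monom, sortA, sortB]
  simp only [List.map_cons, List.map_nil, List.prod_cons, List.prod_nil, mul_one,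
    xg0, xg1, xg2, yg0, yg1, yg2, mul_assoc]
  rfl

lemma mon22_2 : monom ({0,1} : Finset (Fin 3)) ({1,2} : Finset (Fin 3)) = m22 2 := by
  rw [monom, sortA, sortC]
  simp only [List.map_cons, List.map_nil, List.prod_cons, List.prod_nil, mul_one,
    xg0, xg1, xg2, yg0, yg1, yg2, mul_assoc]
  rfl

lemma mon22_3 : monom ({0,2} : Finset (Fin 3)) ({0,1} : Finset (Fin 3)) = m22 3 := by
  rw [monom, sortB, sortA]
  simp only [List.map_cons, List.map_nil, List.prod_cons, List.prod_nil, mul_one,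
    xg0, xg1, xg2, yg0, yg1, yg2, mul_assoc]
  rfl

lemma mon22_4 : monom ({0,2} : Finset (Fin 3)) ({0,2} : Finset (Fin 3)) = m22 4 := by
  rw [monom, sortB]
  simp only [List.map_cons, List.map_nil, List.prod_cons, List.prod_nil, mul_one,
    xg0, xg1, xg2, yg0, yg1, yg2, mul_assoc]
  rfl

lemma mon22_5 : monom ({0,2} : Finset (Fin 3)) ({1,2} : Finset (Fin 3)) = m22 5 := by
  rw [monom, sortB, sortC]
  simp only [List.map_cons, List.map_nil, List.prod_cons, List.prod_nil, mul_one,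
    xg0, xg1, xg2, yg0, yg1, yg2, mul_assoc]
  rfl

lemma mon22_6 : monom ({1,2} : Finset (Fin 3)) ({0,1} : Finset (Fin 3)) = m22 6 := by
  rw [monom, sortC, sortA]
  simp only [List.map_cons, List.map_nil, List.prod_cons, List.prod_nil, mul_one,
    xg0, xg1, xg2, yg0, yg1, yg2, mul_assoc]
  rfl

lemma mon22_7 : monom ({1,2} : Finset (Fin 3)) ({0,2} : Finset (Fin 3)) = m22 7 := by
  rw [monom, sortC, sortB]
  simp only [List.map_cons, List.map_nil, List.prod_cons, List.prod_nil, mul_one,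
    xg0, xg1, xg2, yg0, yg1, yg2, mul_assoc]
  rfl

lemma mon22_8 : monom ({1,2} : Finset (Fin 3)) ({1,2} : Finset (Fin 3)) = m22 8 := by
  rw [monom, sortC]
  simp only [List.map_cons, List.map_nil, List.prod_cons, List.prod_nil, mul_one,
    xg0, xg1, xg2, yg0, yg1, yg2, mul_assoc]
  rfl

lemma mon21_0 : monom ({0,1} : Finset (Fin 3)) ({0} : Finset (Fin 3)) = m21 0 := by
  rw [monom, sortA, sortD]
  simp only [List.map_cons, List.map_nil, List.prod_cons, List.prod_nil, mul_one,
    xg0, xg1, xg2, yg0, yg1, yg2, mul_assoc]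
  rfl

lemma mon21_1 : monom ({0,1} : Finset (Fin 3)) ({1} : Finset (Fin 3)) = m21 1 := by
  rw [monom, sortA, sortE]
  simp only [List.map_cons, List.map_nil, List.prod_cons, List.prod_nil, mul_one,
    xg0, xg1, xg2, yg0, yg1, yg2, mul_assoc]
  rfl

lemma mon21_2 : monom ({0,1} : Finset (Fin 3)) ({2} : Finset (Fin 3)) = m21 2 := by
  rw [monom, sortA, sortF]
  simp only [List.map_cons, List.map_nil, List.prod_cons, List.prod_nil, mul_one,
    xg0, xg1, xg2, yg0, yg1, yg2, mul_assoc]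
  rfl

lemma mon21_3 : monom ({0,2} : Finset (Fin 3)) ({0} : Finset (Fin 3)) = m21 3 := by
  rw [monom, sortB, sortD]
  simp only [List.map_cons, List.map_nil, List.prod_cons, List.prod_nil, mul_one,
    xg0, xg1, xg2, yg0, yg1, yg2, mul_assoc]
  rfl

lemma mon21_4 : monom ({0,2} : Finset (Fin 3)) ({1} : Finset (Fin 3)) = m21 4 := by
  rw [monom, sortB, sortE]
  simp only [List.map_cons, List.map_nil, List.prod_cons, List.prod_nil, mul_one,
    xg0, xg1, xg2, yg0, yg1, yg2, mul_assoc]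
  rfl

lemma mon21_5 : monom ({0,2} : Finset (Fin 3)) ({2} : Finset (Fin 3)) = m21 5 := by
  rw [monom, sortB, sortF]
  simp only [List.map_cons, List.map_nil, List.prod_cons, List.prod_nil, mul_one,
    xg0, xg1, xg2, yg0, yg1, yg2, mul_assoc]
  rfl

lemma mon21_6 : monom ({1,2} : Finset (Fin 3)) ({0} : Finset (Fin 3)) = m21 6 := by
  rw [monom, sortC, sortD]
  simp only [List.map_cons, List.map_nil, List.prod_cons, List.prod_nil, mul_one,
    xg0, xg1, xg2, yg0, yg1, yg2, mul_assoc]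
  rfl

lemma mon21_7 : monom ({1,2} : Finset (Fin 3)) ({1} : Finset (Fin 3)) = m21 7 := by
  rw [monom, sortC, sortE]
  simp only [List.map_cons, List.map_nil, List.prod_cons, List.prod_nil, mul_one,
    xg0, xg1, xg2, yg0, yg1, yg2, mul_assoc]
  rfl

lemma mon21_8 : monom ({1,2} : Finset (Fin 3)) ({2} : Finset (Fin 3)) = m21 8 := by
  rw [monom, sortC, sortF]
  simp only [List.map_cons, List.map_nil, List.prod_cons, List.prod_nil, mul_one,
    xg0, xg1, xg2, yg0, yg1, yg2, mul_assoc]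
  rfl

lemma hset22 : {m : Lam | ∃ s u : Finset (Fin 3), (s.card : ℤ) = 2 ∧ (u.card : ℤ) = 2 ∧
    m = monom s u} = Set.range m22 := by
  ext m
  simp only [Set.mem_setOf_eq, Set.mem_range]
  constructor
  · rintro ⟨s, u, hs, hu, rfl⟩
    have hs2 : s.card = 2 := by exact_mod_cast hs
    have hu2 : u.card = 2 := by exact_mod_cast hu
    rcases card2 s hs2 with rfl|rfl|rfl <;> rcases card2 u hu2 with rfl|rfl|rfl
    exacts [⟨0, mon22_0.symm⟩, ⟨1, mon22_1.symm⟩, ⟨2, mon22_2.symm⟩,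
      ⟨3, mon22_3.symm⟩, ⟨4, mon22_4.symm⟩, ⟨5, mon22_5.symm⟩,
      ⟨6, mon22_6.symm⟩, ⟨7, mon22_7.symm⟩, ⟨8, mon22_8.symm⟩]
  · rintro ⟨i, rfl⟩
    fin_cases i
    exacts [⟨{0,1}, {0,1}, by decide, by decide, mon22_0.symm⟩,
      ⟨{0,1}, {0,2}, by decide, by decide, mon22_1.symm⟩,
      ⟨{0,1}, {1,2}, by decide, by decide, mon22_2.symm⟩,
      ⟨{0,2}, {0,1}, by decide, by decide, mon22_3.symm⟩,
      ⟨{0,2}, {0,2}, by decide, by decide, mon22_4.symm⟩,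
      ⟨{0,2}, {1,2}, by decide, by decide, mon22_5.symm⟩,
      ⟨{1,2}, {0,1}, by decide, by decide, mon22_6.symm⟩,
      ⟨{1,2}, {0,2}, by decide, by decide, mon22_7.symm⟩,
      ⟨{1,2}, {1,2}, by decide, by decide, mon22_8.symm⟩]

lemma hset21 : {m : Lam | ∃ s u : Finset (Fin 3), (s.card : ℤ) = 2 ∧ (u.card : ℤ) = 1 ∧
    m = monom s u} = Set.range m21 := by
  ext m
  simp only [Set.mem_setOf_eq, Set.mem_range]
  constructor
  · rintro ⟨s, u, hs, hu, rfl⟩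
    have hs2 : s.card = 2 := by exact_mod_cast hs
    have hu1 : u.card = 1 := by exact_mod_cast hu
    rcases card2 s hs2 with rfl|rfl|rfl <;> rcases card1 u hu1 with rfl|rfl|rfl
    exacts [⟨0, mon21_0.symm⟩, ⟨1, mon21_1.symm⟩, ⟨2, mon21_2.symm⟩,
      ⟨3, mon21_3.symm⟩, ⟨4, mon21_4.symm⟩, ⟨5, mon21_5.symm⟩,
      ⟨6, mon21_6.symm⟩, ⟨7, mon21_7.symm⟩, ⟨8, mon21_8.symm⟩]
  · rintro ⟨i, rfl⟩
    fin_cases i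
    exacts [⟨{0,1}, {0}, by decide, by decide, mon21_0.symm⟩,
      ⟨{0,1}, {1}, by decide, by decide, mon21_1.symm⟩,
      ⟨{0,1}, {2}, by decide, by decide, mon21_2.symm⟩,
      ⟨{0,2}, {0}, by decide, by decide, mon21_3.symm⟩,
      ⟨{0,2}, {1}, by decide, by decide, mon21_4.symm⟩,
      ⟨{0,2}, {2}, by decide, by decide, mon21_5.symm⟩,
      ⟨{1,2}, {0}, by decide, by decide, mon21_6.symm⟩,
      ⟨{1,2}, {1}, by decide, by decide, mon21_7.symm⟩,
      ⟨{1,2}, {2}, by decide, by decide, mon21_8.symm⟩]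


set_option maxHeartbeats 16000000

/-- `dim H^{2,2}(t) = dim ((ker δ_t ∩ Λ^{2,2}) / δ_t(Λ^{2,1}))` equals
`6` if `t = 0` and `5` otherwise. -/
theorem stmt11 (t11 t12 t21 t22 : ℂ) (del delta : Lam →ₗ[ℂ] Lam)
    (hdel : IsDel del) (hdelta : IsDelta t11 t12 t21 t22 delta) :
    ((t11, t12, t21, t22) = (0, 0, 0, 0) →
      quotDim (LinearMap.ker delta ⊓ bigraded 2 2) (Submodule.map delta (bigraded 2 1)) = 6) ∧
    ((t11, t12, t21, t22) ≠ (0, 0, 0, 0) →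
      quotDim (LinearMap.ker delta ⊓ bigraded 2 2) (Submodule.map delta (bigraded 2 1)) = 5) := by
  clear hdel
  obtain ⟨had, hx0, hx1, hx2, hy0, hy1, hy2⟩ := hdelta
  have h0 : delta (gen 0) = 0 := hx0
  have h1 : delta (gen 1) = 0 := hx1
  have h2 : delta (gen 2) = t21 • (gen 0 * gen 3) - t11 • (gen 1 * gen 3)
      + t22 • (gen 0 * gen 4) - t12 • (gen 1 * gen 4) := hx2
  have h3 : delta (gen 3) = 0 := hy0
  have h4 : delta (gen 4) = 0 := hy1
  have h5 : delta (gen 5) = -(gen 3 * gen 4) := hy2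
  clear hx0 hx1 hx2 hy0 hy1 hy2
  have d0 : delta (gen 0 * (gen 1 * (gen 3 * gen 4))) = 0 := by
    simp (config := { decide := true }) [peel had, h0, h1, h2, h3, h4, h5, gswap', gswap,
      gsq, gsq', mul_assoc, smul_mul_assoc, mul_smul_comm, sub_mul, add_mul, mul_sub,
      mul_add, smul_smul]
    all_goals module
  have d1 : delta (gen 0 * (gen 1 * (gen 3 * gen 5))) = 0 := by
    simp (config := { decide := true }) [peel had, h0, h1, h2, h3, h4, h5, gswap', gswap,
      gsq, gsq', mul_assoc, smul_mul_assoc, mul_smul_comm, sub_mul, add_mul, mul_sub,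
      mul_add, smul_smul]
    all_goals module
  have d2 : delta (gen 0 * (gen 1 * (gen 4 * gen 5))) = 0 := by
    simp (config := { decide := true }) [peel had, h0, h1, h2, h3, h4, h5, gswap', gswap,
      gsq, gsq', mul_assoc, smul_mul_assoc, mul_smul_comm, sub_mul, add_mul, mul_sub,
      mul_add, smul_smul]
    all_goals module
  have d3 : delta (gen 0 * (gen 2 * (gen 3 * gen 4))) = 0 := by
    simp (config := { decide := true }) [peel had, h0, h1, h2, h3, h4, h5, gswap', gswap,
      gsq, gsq', mul_assoc, smul_mul_assoc, mul_smul_comm, sub_mul, add_mul, mul_sub,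
      mul_add, smul_smul]
    all_goals module
  have d4 : delta (gen 0 * (gen 2 * (gen 3 * gen 5))) = (-t12) • (gen 0 * (gen 1 * (gen 3 * (gen 4 * gen 5)))) := by
    simp (config := { decide := true }) [peel had, h0, h1, h2, h3, h4, h5, gswap', gswap,
      gsq, gsq', mul_assoc, smul_mul_assoc, mul_smul_comm, sub_mul, add_mul, mul_sub,
      mul_add, smul_smul]
    all_goals module
  have d5 : delta (gen 0 * (gen 2 * (gen 4 * gen 5))) = t11 • (gen 0 * (gen 1 * (gen 3 * (gen 4 * gen 5)))) := by
    simp (config := { decide := true }) [peel had, h0, h1, h2, h3, h4, h5, gswap', gswap,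
      gsq, gsq', mul_assoc, smul_mul_assoc, mul_smul_comm, sub_mul, add_mul, mul_sub,
      mul_add, smul_smul]
    all_goals module
  have d6 : delta (gen 1 * (gen 2 * (gen 3 * gen 4))) = 0 := by
    simp (config := { decide := true }) [peel had, h0, h1, h2, h3, h4, h5, gswap', gswap,
      gsq, gsq', mul_assoc, smul_mul_assoc, mul_smul_comm, sub_mul, add_mul, mul_sub,
      mul_add, smul_smul]
    all_goals module
  have d7 : delta (gen 1 * (gen 2 * (gen 3 * gen 5))) = (-t22) • (gen 0 * (gen 1 * (gen 3 * (gen 4 * gen 5)))) := by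
    simp (config := { decide := true }) [peel had, h0, h1, h2, h3, h4, h5, gswap', gswap,
      gsq, gsq', mul_assoc, smul_mul_assoc, mul_smul_comm, sub_mul, add_mul, mul_sub,
      mul_add, smul_smul]
    all_goals module
  have d8 : delta (gen 1 * (gen 2 * (gen 4 * gen 5))) = t21 • (gen 0 * (gen 1 * (gen 3 * (gen 4 * gen 5)))) := by
    simp (config := { decide := true }) [peel had, h0, h1, h2, h3, h4, h5, gswap', gswap,
      gsq, gsq', mul_assoc, smul_mul_assoc, mul_smul_comm, sub_mul, add_mul, mul_sub,
      mul_add, smul_smul]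
    all_goals module
  have e0 : delta (gen 0 * (gen 1 * gen 3)) = 0 := by
    simp (config := { decide := true }) [peel had, h0, h1, h2, h3, h4, h5, gswap', gswap,
      gsq, gsq', mul_assoc, smul_mul_assoc, mul_smul_comm, sub_mul, add_mul, mul_sub,
      mul_add, smul_smul]
    all_goals module
  have e1 : delta (gen 0 * (gen 1 * gen 4)) = 0 := by
    simp (config := { decide := true }) [peel had, h0, h1, h2, h3, h4, h5, gswap', gswap,
      gsq, gsq', mul_assoc, smul_mul_assoc, mul_smul_comm, sub_mul, add_mul, mul_sub,
      mul_add, smul_smul]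
    all_goals module
  have e2 : delta (gen 0 * (gen 1 * gen 5)) = -(gen 0 * (gen 1 * (gen 3 * gen 4))) := by
    simp (config := { decide := true }) [peel had, h0, h1, h2, h3, h4, h5, gswap', gswap,
      gsq, gsq', mul_assoc, smul_mul_assoc, mul_smul_comm, sub_mul, add_mul, mul_sub,
      mul_add, smul_smul]
    all_goals module
  have e3 : delta (gen 0 * (gen 2 * gen 3)) = (-t12) • (gen 0 * (gen 1 * (gen 3 * gen 4))) := by
    simp (config := { decide := true }) [peel had, h0, h1, h2, h3, h4, h5, gswap', gswap,
      gsq, gsq', mul_assoc, smul_mul_assoc, mul_smul_comm, sub_mul, add_mul, mul_sub,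
      mul_add, smul_smul]
    all_goals module
  have e4 : delta (gen 0 * (gen 2 * gen 4)) = t11 • (gen 0 * (gen 1 * (gen 3 * gen 4))) := by
    simp (config := { decide := true }) [peel had, h0, h1, h2, h3, h4, h5, gswap', gswap,
      gsq, gsq', mul_assoc, smul_mul_assoc, mul_smul_comm, sub_mul, add_mul, mul_sub,
      mul_add, smul_smul]
    all_goals module
  have e5 : delta (gen 0 * (gen 2 * gen 5)) = t11 • (gen 0 * (gen 1 * (gen 3 * gen 5))) + t12 • (gen 0 * (gen 1 * (gen 4 * gen 5))) - (gen 0 * (gen 2 * (gen 3 * gen 4))) := by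
    simp (config := { decide := true }) [peel had, h0, h1, h2, h3, h4, h5, gswap', gswap,
      gsq, gsq', mul_assoc, smul_mul_assoc, mul_smul_comm, sub_mul, add_mul, mul_sub,
      mul_add, smul_smul]
    all_goals module
  have e6 : delta (gen 1 * (gen 2 * gen 3)) = (-t22) • (gen 0 * (gen 1 * (gen 3 * gen 4))) := by
    simp (config := { decide := true }) [peel had, h0, h1, h2, h3, h4, h5, gswap', gswap,
      gsq, gsq', mul_assoc, smul_mul_assoc, mul_smul_comm, sub_mul, add_mul, mul_sub,
      mul_add, smul_smul]
    all_goals module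
  have e7 : delta (gen 1 * (gen 2 * gen 4)) = t21 • (gen 0 * (gen 1 * (gen 3 * gen 4))) := by
    simp (config := { decide := true }) [peel had, h0, h1, h2, h3, h4, h5, gswap', gswap,
      gsq, gsq', mul_assoc, smul_mul_assoc, mul_smul_comm, sub_mul, add_mul, mul_sub,
      mul_add, smul_smul]
    all_goals module
  have e8 : delta (gen 1 * (gen 2 * gen 5)) = t21 • (gen 0 * (gen 1 * (gen 3 * gen 5))) + t22 • (gen 0 * (gen 1 * (gen 4 * gen 5))) - (gen 1 * (gen 2 * (gen 3 * gen 4))) := by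
    simp (config := { decide := true }) [peel had, h0, h1, h2, h3, h4, h5, gswap', gswap,
      gsq, gsq', mul_assoc, smul_mul_assoc, mul_smul_comm, sub_mul, add_mul, mul_sub,
      mul_add, smul_smul]
    all_goals module
  have dm0 : delta (m22 0) = 0 := d0
  have dm1 : delta (m22 1) = 0 := d1
  have dm2 : delta (m22 2) = 0 := d2
  have dm3 : delta (m22 3) = 0 := d3
  have dm4 : delta (m22 4) = (-t12) • (gen 0 * (gen 1 * (gen 3 * (gen 4 * gen 5)))) := d4
  have dm5 : delta (m22 5) = t11 • (gen 0 * (gen 1 * (gen 3 * (gen 4 * gen 5)))) := d5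
  have dm6 : delta (m22 6) = 0 := d6
  have dm7 : delta (m22 7) = (-t22) • (gen 0 * (gen 1 * (gen 3 * (gen 4 * gen 5)))) := d7
  have dm8 : delta (m22 8) = t21 • (gen 0 * (gen 1 * (gen 3 * (gen 4 * gen 5)))) := d8
  have em0 : delta (m21 0) = 0 := e0
  have em1 : delta (m21 1) = 0 := e1
  have em2 : delta (m21 2) = -(m22 0) := e2
  have em3 : delta (m21 3) = (-t12) • m22 0 := e3
  have em4 : delta (m21 4) = t11 • m22 0 := e4
  have em5 : delta (m21 5) = t11 • m22 1 + t12 • m22 2 - m22 3 := e5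
  have em6 : delta (m21 6) = (-t22) • m22 0 := e6
  have em7 : delta (m21 7) = t21 • m22 0 := e7
  have em8 : delta (m21 8) = t21 • m22 1 + t22 • m22 2 - m22 6 := e8
  have hB : bigraded 2 2 = Submodule.span ℂ (Set.range m22) := by
    unfold bigraded; rw [hset22]
  have hB21 : bigraded 2 1 = Submodule.span ℂ (Set.range m21) := by
    unfold bigraded; rw [hset21]
  haveI instB : FiniteDimensional ℂ ↥(Submodule.span ℂ (Set.range m22)) :=
    FiniteDimensional.span_of_finite ℂ (Set.finite_range m22)
  have hKle : LinearMap.ker delta ⊓ bigraded 2 2 ≤ Submodule.span ℂ (Set.range m22) :=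
    le_trans inf_le_right (le_of_eq hB)
  haveI instK : FiniteDimensional ℂ ↥(LinearMap.ker delta ⊓ bigraded 2 2) :=
    Submodule.finiteDimensional_of_le hKle
  -- every element of Λ^{2,2} maps to a multiple of X
  have hex : ∀ x ∈ bigraded 2 2, ∃ α : ℂ, delta x = α • (gen 0 * (gen 1 * (gen 3 * (gen 4 * gen 5)))) := by
    intro x hx
    rw [hB] at hx
    induction hx using Submodule.span_induction with
    | mem y hy =>
      obtain ⟨i, rfl⟩ := hy
      fin_cases i
      exacts [⟨0, by rw [zero_smul]; exact dm0⟩, ⟨0, by rw [zero_smul]; exact dm1⟩,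
        ⟨0, by rw [zero_smul]; exact dm2⟩, ⟨0, by rw [zero_smul]; exact dm3⟩,
        ⟨(-t12), dm4⟩, ⟨t11, dm5⟩, ⟨0, by rw [zero_smul]; exact dm6⟩,
        ⟨(-t22), dm7⟩, ⟨t21, dm8⟩]
    | zero => exact ⟨0, by simp⟩
    | add x y hx' hy' ihx ihy =>
      obtain ⟨a, ha⟩ := ihx; obtain ⟨b, hb⟩ := ihy
      exact ⟨a + b, by rw [map_add, ha, hb, add_smul]⟩
    | smul r x hx' ih =>
      obtain ⟨a, ha⟩ := ih
      exact ⟨r * a, by rw [map_smul, ha, smul_smul]⟩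
  have key : ∀ x ∈ bigraded 2 2,
      delta x = (coeffF 5 ![0,1,3,4,5] (delta x)) • (gen 0 * (gen 1 * (gen 3 * (gen 4 * gen 5)))) := by
    intro x hx
    obtain ⟨α, hα⟩ := hex x hx
    rw [hα, map_smul, cXval, smul_eq_mul, mul_one]
  -- the image of Λ^{2,1}
  have hI : Submodule.map delta (bigraded 2 1) =
      Submodule.span ℂ (Set.range (![m22 0, t11 • m22 1 + t12 • m22 2 - m22 3, t21 • m22 1 + t22 • m22 2 - m22 6] : Fin 3 → Lam)) := by
    rw [hB21, Submodule.map_span, ← Set.range_comp]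
    apply le_antisymm
    · rw [Submodule.span_le]
      rintro x ⟨i, rfl⟩
      fin_cases i
      · show delta (m21 0) ∈ (Submodule.span ℂ (Set.range (![m22 0, t11 • m22 1 + t12 • m22 2 - m22 3, t21 • m22 1 + t22 • m22 2 - m22 6] : Fin 3 → Lam)) : Set Lam)
        rw [em0]; exact Submodule.zero_mem _
      · show delta (m21 1) ∈ (Submodule.span ℂ (Set.range (![m22 0, t11 • m22 1 + t12 • m22 2 - m22 3, t21 • m22 1 + t22 • m22 2 - m22 6] : Fin 3 → Lam)) : Set Lam)
        rw [em1]; exact Submodule.zero_mem _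
      · show delta (m21 2) ∈ (Submodule.span ℂ (Set.range (![m22 0, t11 • m22 1 + t12 • m22 2 - m22 3, t21 • m22 1 + t22 • m22 2 - m22 6] : Fin 3 → Lam)) : Set Lam)
        rw [em2]; exact neg_mem (Submodule.subset_span ⟨0, rfl⟩)
      · show delta (m21 3) ∈ (Submodule.span ℂ (Set.range (![m22 0, t11 • m22 1 + t12 • m22 2 - m22 3, t21 • m22 1 + t22 • m22 2 - m22 6] : Fin 3 → Lam)) : Set Lam)
        rw [em3]; exact Submodule.smul_mem _ _ (Submodule.subset_span ⟨0, rfl⟩)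
      · show delta (m21 4) ∈ (Submodule.span ℂ (Set.range (![m22 0, t11 • m22 1 + t12 • m22 2 - m22 3, t21 • m22 1 + t22 • m22 2 - m22 6] : Fin 3 → Lam)) : Set Lam)
        rw [em4]; exact Submodule.smul_mem _ _ (Submodule.subset_span ⟨0, rfl⟩)
      · show delta (m21 5) ∈ (Submodule.span ℂ (Set.range (![m22 0, t11 • m22 1 + t12 • m22 2 - m22 3, t21 • m22 1 + t22 • m22 2 - m22 6] : Fin 3 → Lam)) : Set Lam)
        rw [em5]; exact Submodule.subset_span ⟨1, rfl⟩
      · show delta (m21 6) ∈ (Submodule.span ℂ (Set.range (![m22 0, t11 • m22 1 + t12 • m22 2 - m22 3, t21 • m22 1 + t22 • m22 2 - m22 6] : Fin 3 → Lam)) : Set Lam)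
        rw [em6]; exact Submodule.smul_mem _ _ (Submodule.subset_span ⟨0, rfl⟩)
      · show delta (m21 7) ∈ (Submodule.span ℂ (Set.range (![m22 0, t11 • m22 1 + t12 • m22 2 - m22 3, t21 • m22 1 + t22 • m22 2 - m22 6] : Fin 3 → Lam)) : Set Lam)
        rw [em7]; exact Submodule.smul_mem _ _ (Submodule.subset_span ⟨0, rfl⟩)
      · show delta (m21 8) ∈ (Submodule.span ℂ (Set.range (![m22 0, t11 • m22 1 + t12 • m22 2 - m22 3, t21 • m22 1 + t22 • m22 2 - m22 6] : Fin 3 → Lam)) : Set Lam)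
        rw [em8]; exact Submodule.subset_span ⟨2, rfl⟩
    · rw [Submodule.span_le]
      rintro x ⟨i, rfl⟩
      simp only [SetLike.mem_coe]
      fin_cases i
      · have hmem : (delta ∘ m21) 2 ∈ Submodule.span ℂ (Set.range (delta ∘ m21)) :=
          Submodule.subset_span ⟨2, rfl⟩
        have h' : ((delta ∘ m21) 2 : Lam) = -(m22 0) := em2
        rw [h'] at hmem
        have h2m := neg_mem hmem
        rw [neg_neg] at h2m
        exact h2m
      · have hmem : (delta ∘ m21) 5 ∈ Submodule.span ℂ (Set.range (delta ∘ m21)) :=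
          Submodule.subset_span ⟨5, rfl⟩
        have h' : ((delta ∘ m21) 5 : Lam) = t11 • m22 1 + t12 • m22 2 - m22 3 := em5
        rw [h'] at hmem
        exact hmem
      · have hmem : (delta ∘ m21) 8 ∈ Submodule.span ℂ (Set.range (delta ∘ m21)) :=
          Submodule.subset_span ⟨8, rfl⟩
        have h' : ((delta ∘ m21) 8 : Lam) = t21 • m22 1 + t22 • m22 2 - m22 6 := em8
        rw [h'] at hmem
        exact hmem
  -- linear independence of the three image generators
  have hWli : LinearIndependent ℂ (![m22 0, t11 • m22 1 + t12 • m22 2 - m22 3, t21 • m22 1 + t22 • m22 2 - m22 6] : Fin 3 → Lam) := by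
    have q00 : coeffF 4 (S22 0) ((![m22 0, t11 • m22 1 + t12 • m22 2 - m22 3, t21 • m22 1 + t22 • m22 2 - m22 6] : Fin 3 → Lam) 0) = 1 := evd 0
    have q01 : coeffF 4 (S22 0) ((![m22 0, t11 • m22 1 + t12 • m22 2 - m22 3, t21 • m22 1 + t22 • m22 2 - m22 6] : Fin 3 → Lam) 1) = 0 := by
      show coeffF 4 (S22 0) (t11 • m22 1 + t12 • m22 2 - m22 3) = 0
      rw [map_sub, map_add, map_smul, map_smul, evo 0 1 (by decide), evo 0 2 (by decide),
        evo 0 3 (by decide)]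
      simp
    have q02 : coeffF 4 (S22 0) ((![m22 0, t11 • m22 1 + t12 • m22 2 - m22 3, t21 • m22 1 + t22 • m22 2 - m22 6] : Fin 3 → Lam) 2) = 0 := by
      show coeffF 4 (S22 0) (t21 • m22 1 + t22 • m22 2 - m22 6) = 0
      rw [map_sub, map_add, map_smul, map_smul, evo 0 1 (by decide), evo 0 2 (by decide),
        evo 0 6 (by decide)]
      simp
    have q30 : coeffF 4 (S22 3) ((![m22 0, t11 • m22 1 + t12 • m22 2 - m22 3, t21 • m22 1 + t22 • m22 2 - m22 6] : Fin 3 → Lam) 0) = 0 := evo 3 0 (by decide)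
    have q31 : coeffF 4 (S22 3) ((![m22 0, t11 • m22 1 + t12 • m22 2 - m22 3, t21 • m22 1 + t22 • m22 2 - m22 6] : Fin 3 → Lam) 1) = -1 := by
      show coeffF 4 (S22 3) (t11 • m22 1 + t12 • m22 2 - m22 3) = -1
      rw [map_sub, map_add, map_smul, map_smul, evo 3 1 (by decide), evo 3 2 (by decide),
        evd 3]
      simp
    have q32 : coeffF 4 (S22 3) ((![m22 0, t11 • m22 1 + t12 • m22 2 - m22 3, t21 • m22 1 + t22 • m22 2 - m22 6] : Fin 3 → Lam) 2) = 0 := by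
      show coeffF 4 (S22 3) (t21 • m22 1 + t22 • m22 2 - m22 6) = 0
      rw [map_sub, map_add, map_smul, map_smul, evo 3 1 (by decide), evo 3 2 (by decide),
        evo 3 6 (by decide)]
      simp
    have q60 : coeffF 4 (S22 6) ((![m22 0, t11 • m22 1 + t12 • m22 2 - m22 3, t21 • m22 1 + t22 • m22 2 - m22 6] : Fin 3 → Lam) 0) = 0 := evo 6 0 (by decide)
    have q61 : coeffF 4 (S22 6) ((![m22 0, t11 • m22 1 + t12 • m22 2 - m22 3, t21 • m22 1 + t22 • m22 2 - m22 6] : Fin 3 → Lam) 1) = 0 := by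
      show coeffF 4 (S22 6) (t11 • m22 1 + t12 • m22 2 - m22 3) = 0
      rw [map_sub, map_add, map_smul, map_smul, evo 6 1 (by decide), evo 6 2 (by decide),
        evo 6 3 (by decide)]
      simp
    have q62 : coeffF 4 (S22 6) ((![m22 0, t11 • m22 1 + t12 • m22 2 - m22 3, t21 • m22 1 + t22 • m22 2 - m22 6] : Fin 3 → Lam) 2) = -1 := by
      show coeffF 4 (S22 6) (t21 • m22 1 + t22 • m22 2 - m22 6) = -1
      rw [map_sub, map_add, map_smul, map_smul, evo 6 1 (by decide), evo 6 2 (by decide),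
        evd 6]
      simp
    rw [Fintype.linearIndependent_iff]
    intro c hc
    have E0 := congrArg (coeffF 4 (S22 0)) hc
    have E3 := congrArg (coeffF 4 (S22 3)) hc
    have E6 := congrArg (coeffF 4 (S22 6)) hc
    rw [map_sum, map_zero, Fin.sum_univ_three] at E0 E3 E6
    simp only [map_smul, smul_eq_mul] at E0 E3 E6
    rw [q00, q01, q02] at E0
    rw [q30, q31, q32] at E3
    rw [q60, q61, q62] at E6
    simp at E0 E3 E6
    intro i
    fin_cases i
    exacts [E0, E3, E6]
  have hIfr : Module.finrank ℂ ↥(Submodule.map delta (bigraded 2 1)) = 3 := by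
    rw [hI, finrank_span_eq_card hWli]
    simp
  have hIK : Submodule.map delta (bigraded 2 1) ≤ LinearMap.ker delta ⊓ bigraded 2 2 := by
    rw [hI]
    apply le_inf
    · rw [Submodule.span_le]
      rintro x ⟨i, rfl⟩
      simp only [SetLike.mem_coe, LinearMap.mem_ker]
      fin_cases i
      · exact dm0
      · show delta (t11 • m22 1 + t12 • m22 2 - m22 3) = 0
        rw [map_sub, map_add, map_smul, map_smul, dm1, dm2, dm3]
        simp
      · show delta (t21 • m22 1 + t22 • m22 2 - m22 6) = 0
        rw [map_sub, map_add, map_smul, map_smul, dm1, dm2, dm6]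
        simp
    · rw [hB, Submodule.span_le]
      rintro x ⟨i, rfl⟩
      simp only [SetLike.mem_coe]
      fin_cases i
      · exact Submodule.subset_span ⟨0, rfl⟩
      · show t11 • m22 1 + t12 • m22 2 - m22 3 ∈ Submodule.span ℂ (Set.range m22)
        exact sub_mem (add_mem (Submodule.smul_mem _ _ (Submodule.subset_span ⟨1, rfl⟩))
          (Submodule.smul_mem _ _ (Submodule.subset_span ⟨2, rfl⟩)))
          (Submodule.subset_span ⟨3, rfl⟩)
      · show t21 • m22 1 + t22 • m22 2 - m22 6 ∈ Submodule.span ℂ (Set.range m22)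
        exact sub_mem (add_mem (Submodule.smul_mem _ _ (Submodule.subset_span ⟨1, rfl⟩))
          (Submodule.smul_mem _ _ (Submodule.subset_span ⟨2, rfl⟩)))
          (Submodule.subset_span ⟨6, rfl⟩)
  have hco : Module.finrank ℂ
      ↥(Submodule.comap (LinearMap.ker delta ⊓ bigraded 2 2).subtype
        (Submodule.map delta (bigraded 2 1))) = 3 := by
    rw [LinearEquiv.finrank_eq (Submodule.comapSubtypeEquivOfLe hIK)]
    exact hIfr
  have hrn := Submodule.finrank_quotient_add_finrank
    (Submodule.comap (LinearMap.ker delta ⊓ bigraded 2 2).subtype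
      (Submodule.map delta (bigraded 2 1)))
  rw [hco] at hrn
  constructor
  · -- t = 0
    intro ht
    rw [Prod.mk.injEq, Prod.mk.injEq, Prod.mk.injEq] at ht
    obtain ⟨a, b, c, d⟩ := ht
    subst a; subst b; subst c; subst d
    have hK9 : LinearMap.ker delta ⊓ bigraded 2 2 = Submodule.span ℂ (Set.range m22) := by
      apply le_antisymm hKle
      apply le_inf _ (le_of_eq hB.symm)
      rw [Submodule.span_le]
      rintro x ⟨i, rfl⟩
      simp only [SetLike.mem_coe, LinearMap.mem_ker]
      fin_cases i
      · exact dm0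
      · exact dm1
      · exact dm2
      · exact dm3
      · show delta (m22 4) = 0
        rw [dm4]; simp
      · show delta (m22 5) = 0
        rw [dm5]; simp
      · exact dm6
      · show delta (m22 7) = 0
        rw [dm7]; simp
      · show delta (m22 8) = 0
        rw [dm8]; simp
    have hKfr : Module.finrank ℂ ↥(LinearMap.ker delta ⊓ bigraded 2 2) = 9 := by
      rw [hK9, finrank_span_eq_card hli22]
      simp
    rw [hKfr] at hrn
    show Module.finrank ℂ
      (↥(LinearMap.ker delta ⊓ bigraded 2 2) ⧸
        Submodule.comap (LinearMap.ker delta ⊓ bigraded 2 2).subtype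
          (Submodule.map delta (bigraded 2 1))) = 6
    omega
  · -- t ≠ 0
    intro ht
    have htne : t11 ≠ 0 ∨ t12 ≠ 0 ∨ t21 ≠ 0 ∨ t22 ≠ 0 := by
      by_contra hcon
      push_neg at hcon
      obtain ⟨a, b, c, d⟩ := hcon
      exact ht (by rw [a, b, c, d])
    set G : ↥(Submodule.span ℂ (Set.range m22)) →ₗ[ℂ] ℂ :=
      (coeffF 5 ![0,1,3,4,5]) ∘ₗ (delta ∘ₗ (Submodule.span ℂ (Set.range m22)).subtype) with hG
    have hGapp : ∀ (y : Lam) (hy : y ∈ Submodule.span ℂ (Set.range m22)),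
        G ⟨y, hy⟩ = coeffF 5 ![0,1,3,4,5] (delta y) := fun y hy => rfl
    have hKmap : LinearMap.ker delta ⊓ bigraded 2 2 =
        Submodule.map (Submodule.span ℂ (Set.range m22)).subtype (LinearMap.ker G) := by
      ext x
      constructor
      · intro hx
        obtain ⟨hk, hb⟩ := Submodule.mem_inf.mp hx
        have hb' : x ∈ Submodule.span ℂ (Set.range m22) := by rw [← hB]; exact hb
        refine Submodule.mem_map.mpr ⟨⟨x, hb'⟩, ?_, rfl⟩
        rw [LinearMap.mem_ker, hGapp x hb', LinearMap.mem_ker.mp hk, map_zero]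
      · intro hx
        obtain ⟨⟨y, hy⟩, hgy, rfl⟩ := Submodule.mem_map.mp hx
        have hy2 : y ∈ bigraded 2 2 := by rw [hB]; exact hy
        refine Submodule.mem_inf.mpr ⟨LinearMap.mem_ker.mpr ?_, hy2⟩
        have hk := key y hy2
        rw [LinearMap.mem_ker, hGapp y hy] at hgy
        show delta y = 0
        rw [hk, hgy, zero_smul]
    have hrange : LinearMap.range G = ⊤ := by
      have hGne : ∃ v, G v ≠ 0 := by
        rcases htne with h | h | h | h
        · refine ⟨⟨m22 5, Submodule.subset_span ⟨5, rfl⟩⟩, ?_⟩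
          rw [hGapp, dm5, map_smul, cXval, smul_eq_mul, mul_one]
          exact h
        · refine ⟨⟨m22 4, Submodule.subset_span ⟨4, rfl⟩⟩, ?_⟩
          rw [hGapp, dm4, map_smul, cXval, smul_eq_mul, mul_one]
          exact neg_ne_zero.mpr h
        · refine ⟨⟨m22 8, Submodule.subset_span ⟨8, rfl⟩⟩, ?_⟩
          rw [hGapp, dm8, map_smul, cXval, smul_eq_mul, mul_one]
          exact h
        · refine ⟨⟨m22 7, Submodule.subset_span ⟨7, rfl⟩⟩, ?_⟩
          rw [hGapp, dm7, map_smul, cXval, smul_eq_mul, mul_one]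
          exact neg_ne_zero.mpr h
      obtain ⟨v, hv⟩ := hGne
      rw [LinearMap.range_eq_top]
      intro z
      refine ⟨(z * (G v)⁻¹) • v, ?_⟩
      rw [map_smul, smul_eq_mul, mul_assoc, inv_mul_cancel₀ hv, mul_one]
    have hrankG := LinearMap.finrank_range_add_finrank_ker G
    rw [hrange, finrank_top, Module.finrank_self, finrank_span_eq_card hli22] at hrankG
    simp only [Fintype.card_fin] at hrankG
    have hKfr : Module.finrank ℂ ↥(LinearMap.ker delta ⊓ bigraded 2 2) = 8 := by
      rw [hKmap, Submodule.finrank_map_subtype_eq]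
      omega
    rw [hKfr] at hrn
    show Module.finrank ℂ
      (↥(LinearMap.ker delta ⊓ bigraded 2 2) ⧸
        Submodule.comap (LinearMap.ker delta ⊓ bigraded 2 2).subtype
          (Submodule.map delta (bigraded 2 1))) = 5
    omega
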